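/- Let S be a commutative ring, W ∈ S, and let X⁰, X¹ be S-modules together with S-linear maps d⁰ : X⁰ → X¹ and d¹ : X¹ → X⁰ satisfying d¹ ∘ d⁰ = W • id_{X⁰} and d⁰ ∘ d¹ = W • id_{X¹}. Assume that W acts regularly on X⁰ (i.e. W • x = 0 implies x = 0 for x ∈ X⁰). Then for every x ∈ X⁰ and z ∈ X¹ with d⁰(x) = W • z, one has x = d¹(z). In particular, every element of X⁰ whose image under d⁰ lies in W·X¹ belongs to the image of d¹, so the two-periodic complex of S/(W)-modules obtained by reducing d⁰ and d¹ modulo W is exact at X⁰ ⊗_S S/(W). -/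
import Mathlib

/-- **Acyclicity of the periodification of a matrix factorisation.**
If `d⁰ : X⁰ → X¹` and `d¹ : X¹ → X⁰` satisfy `d¹ ∘ d⁰ = W • id` and
`d⁰ ∘ d¹ = W • id`, and `W` acts regularly on `X⁰`, then any `x ∈ X⁰` with
`d⁰ x = W • z` satisfies `x = d¹ z`; in particular every element of `X⁰`
whose image under `d⁰` lies in `W · X¹` is in the image of `d¹`. -/
theorem matrix_factorisation_periodification_exact
    {S : Type*} [CommRing S] (W : S)
    {X0 X1 : Type*} [AddCommGroup X0] [AddCommGroup X1]
    [Module S X0] [Module S X1]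
    (d0 : X0 →ₗ[S] X1) (d1 : X1 →ₗ[S] X0)
    (h10 : d1 ∘ₗ d0 = W • (LinearMap.id : X0 →ₗ[S] X0))
    (h01 : d0 ∘ₗ d1 = W • (LinearMap.id : X1 →ₗ[S] X1))
    (hreg : ∀ x : X0, W • x = 0 → x = 0) :
    ∀ (x : X0) (z : X1), d0 x = W • z → x = d1 z := by
  intro x z h
  have h1 : W • x = W • d1 z := by
    have := congrArg (fun f => f x) h10
    simp only [LinearMap.comp_apply, LinearMap.smul_apply, LinearMap.id_apply] at this
    rw [← this, h, map_smul]
  have := hreg (x - d1 z) (by rw [smul_sub, h1, sub_self])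
  exact sub_eq_zero.mp this
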